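/- Let w be a standard Gaussian vector in ℝ^p and a, b ∈ ℝ^p. For σ(t) = sin(t), E[σ(w^T a)·σ(w^T b)] = exp(−(‖a‖² + ‖b‖²)/2)·sinh(a^T b). -/

import Mathlib

open MeasureTheory ProbabilityTheory Real BigOperators
open scoped NNReal ENNReal

section Aux
open Complex

lemma gauss_cexp (t : ℝ) :
    ∫ x : ℝ, Complex.exp (x * t * Complex.I) ∂(gaussianReal 0 1) =
      (Real.exp (-t ^ 2 / 2) : ℂ) := by
  rw [gaussianReal_of_var_ne_zero 0 one_ne_zero]
  rw [show (gaussianPDF 0 1) = fun x => ((Real.toNNReal (gaussianPDFReal 0 1 x) : ℝ≥0) : ℝ≥0∞)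
      from rfl]
  rw [integral_withDensity_eq_integral_smul
      ((measurable_gaussianPDFReal 0 1).real_toNNReal)]
  have h1 : ∀ x : ℝ, (Real.toNNReal (gaussianPDFReal 0 1 x)) • Complex.exp (x * t * Complex.I)
      = ((Real.sqrt (2 * π))⁻¹ : ℂ) *
        Complex.exp (-(1/2 : ℂ) * x ^ 2 + (t * Complex.I) * x + 0) := by
    intro x
    rw [NNReal.smul_def, Real.coe_toNNReal _ (gaussianPDFReal_nonneg 0 1 x), Complex.real_smul,
      gaussianPDFReal]
    have : ((1 : ℝ≥0) : ℝ) = 1 := rfl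
    rw [this]
    push_cast
    rw [mul_assoc, ← Complex.exp_add]
    congr 1
    · norm_num
    · ring
  simp_rw [h1]
  rw [integral_const_mul, integral_cexp_quadratic (by norm_num : (-(1/2 : ℂ)).re < 0)]
  have h2 : ((π : ℂ) / -(-(1/2 : ℂ))) ^ (1/2 : ℂ) = (Real.sqrt (2 * π) : ℂ) := by
    rw [Real.sqrt_eq_rpow]
    rw [show ((π : ℂ) / -(-(1/2 : ℂ))) = ((2 * π : ℝ) : ℂ) by push_cast; ring]
    rw [show (1/2 : ℂ) = ((1/2 : ℝ) : ℂ) by norm_num]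
    rw [← Complex.ofReal_cpow (by positivity)]
  rw [h2, ← mul_assoc, inv_mul_cancel₀ (by
      simp only [ne_eq, Complex.ofReal_eq_zero]
      positivity), one_mul]
  have h3 : (0 - (↑t * Complex.I) ^ 2 / (4 * -(1/2 : ℂ))) = ((-t ^ 2 / 2 : ℝ) : ℂ) := by
    rw [mul_pow, Complex.I_sq]
    push_cast
    ring
  rw [h3, Complex.ofReal_exp]

noncomputable def gaussMS : MeasureSpace ℝ := ⟨gaussianReal 0 1⟩

lemma gauss_pi_cexp {p : ℕ} (c : Fin p → ℝ) :
    ∫ w : Fin p → ℝ, Complex.exp ((∑ i, w i * c i : ℝ) * Complex.I)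
        ∂(Measure.pi fun _ => gaussianReal 0 1) =
      (Real.exp (-(∑ i, c i ^ 2) / 2) : ℂ) := by
  have h1 : ∀ w : Fin p → ℝ, Complex.exp ((∑ i, w i * c i : ℝ) * Complex.I)
      = ∏ i, Complex.exp (w i * c i * Complex.I) := by
    intro w
    rw [← Complex.exp_sum]
    congr 1
    rw [← Finset.sum_mul]
    push_cast
    ring
  simp_rw [h1]
  have key : (∫ w : Fin p → ℝ, ∏ i, Complex.exp (w i * c i * Complex.I)
        ∂(Measure.pi fun _ => gaussianReal 0 1))
      = ∏ i, ∫ x : ℝ, Complex.exp (x * c i * Complex.I) ∂(gaussianReal 0 1) :=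
    MeasureTheory.integral_fintype_prod_eq_prod (E := fun _ => ℝ)
      (fun i x => Complex.exp (x * c i * Complex.I)) (μ := fun _ => gaussianReal 0 1)
  rw [key]
  simp_rw [gauss_cexp]
  rw [← Complex.ofReal_prod, ← Real.exp_sum]
  congr 2
  rw [← Finset.sum_div, ← Finset.sum_neg_distrib]

lemma cexp_integrable {p : ℕ} (c : Fin p → ℝ) :
    Integrable (fun w : Fin p → ℝ => Complex.exp ((∑ i, w i * c i : ℝ) * Complex.I))
      (Measure.pi fun _ => gaussianReal 0 1) := by
  have hcont : Continuous fun w : Fin p → ℝ =>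
      Complex.exp ((∑ i, w i * c i : ℝ) * Complex.I) := by
    apply Complex.continuous_exp.comp
    apply Continuous.mul _ continuous_const
    apply Complex.continuous_ofReal.comp
    exact continuous_finset_sum _ fun i _ => (continuous_apply i).mul continuous_const
  refine ⟨hcont.aestronglyMeasurable, ?_⟩
  have : IsProbabilityMeasure (Measure.pi fun _ : Fin p => gaussianReal 0 1) := by
    infer_instance
  apply (hasFiniteIntegral_const (1 : ℝ)).mono'
  filter_upwards with w
  rw [Complex.norm_exp_ofReal_mul_I]

lemma gauss_pi_cos {p : ℕ} (c : Fin p → ℝ) :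
    ∫ w : Fin p → ℝ, Real.cos (∑ i, w i * c i)
        ∂(Measure.pi fun _ => gaussianReal 0 1) =
      Real.exp (-(∑ i, c i ^ 2) / 2) := by
  have h := gauss_pi_cexp c
  have h2 : ∀ w : Fin p → ℝ, Real.cos (∑ i, w i * c i)
      = (Complex.exp ((∑ i, w i * c i : ℝ) * Complex.I)).re := by
    intro w; rw [Complex.exp_ofReal_mul_I_re]
  simp_rw [h2, ← RCLike.re_eq_complex_re]
  rw [integral_re (cexp_integrable c), RCLike.re_eq_complex_re, h, Complex.ofReal_re]

lemma cos_integrable {p : ℕ} (c : Fin p → ℝ) :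
    Integrable (fun w : Fin p → ℝ => Real.cos (∑ i, w i * c i))
      (Measure.pi fun _ => gaussianReal 0 1) := by
  have h2 : ∀ w : Fin p → ℝ, Real.cos (∑ i, w i * c i)
      = (Complex.exp ((∑ i, w i * c i : ℝ) * Complex.I)).re := by
    intro w; rw [Complex.exp_ofReal_mul_I_re]
  simp_rw [h2]
  exact (cexp_integrable c).re

end Aux


/-- For a standard Gaussian vector `w ∼ N(0, I_p)` and `a, b ∈ ℝᵖ`,
`E[sin(wᵀa)·sin(wᵀb)] = exp(−(‖a‖² + ‖b‖²)/2)·sinh(aᵀb)`. -/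
theorem gaussian_sin_kernel {p : ℕ} (a b : Fin p → ℝ) :
    ∫ w : Fin p → ℝ, Real.sin (∑ i, w i * a i) * Real.sin (∑ i, w i * b i)
        ∂(Measure.pi fun _ => gaussianReal 0 1) =
      Real.exp (-((∑ i, a i ^ 2) + ∑ i, b i ^ 2) / 2) * Real.sinh (∑ i, a i * b i) := by
  open Complex in
  have hdiff : ∀ w : Fin p → ℝ, Real.sin (∑ i, w i * a i) * Real.sin (∑ i, w i * b i)
      = (Real.cos (∑ i, w i * (a i - b i)) - Real.cos (∑ i, w i * (a i + b i))) / 2 := by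
    intro w
    have h1 : ∑ i, w i * (a i - b i) = (∑ i, w i * a i) - (∑ i, w i * b i) := by
      rw [← Finset.sum_sub_distrib]; exact Finset.sum_congr rfl fun i _ => by ring
    have h2 : ∑ i, w i * (a i + b i) = (∑ i, w i * a i) + (∑ i, w i * b i) := by
      rw [← Finset.sum_add_distrib]; exact Finset.sum_congr rfl fun i _ => by ring
    rw [h1, h2, Real.cos_sub, Real.cos_add]; ring
  simp_rw [hdiff]
  rw [integral_div, integral_sub (cos_integrable _) (cos_integrable _),
    gauss_pi_cos, gauss_pi_cos]
  have hA : ∑ i, (a i - b i) ^ 2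
      = (∑ i, a i ^ 2) - 2 * (∑ i, a i * b i) + ∑ i, b i ^ 2 := by
    rw [Finset.mul_sum, ← Finset.sum_sub_distrib, ← Finset.sum_add_distrib]
    exact Finset.sum_congr rfl fun i _ => by ring
  have hB : ∑ i, (a i + b i) ^ 2
      = (∑ i, a i ^ 2) + 2 * (∑ i, a i * b i) + ∑ i, b i ^ 2 := by
    rw [Finset.mul_sum, ← Finset.sum_add_distrib, ← Finset.sum_add_distrib]
    exact Finset.sum_congr rfl fun i _ => by ring
  rw [hA, hB]
  set A := ∑ i, a i ^ 2
  set B := ∑ i, b i ^ 2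
  set S := ∑ i, a i * b i
  rw [show -(A - 2 * S + B) / 2 = -(A + B) / 2 + S by ring,
    show -(A + 2 * S + B) / 2 = -(A + B) / 2 + -S by ring,
    Real.exp_add, Real.exp_add, Real.sinh_eq]
  ring
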